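/- Let B ⊆ ℝ^d be a compact set. Then there exists a finite set X ⊆ B with |X| ≤ 1 + d(d+1)/2 such that for every linear function ℓ: ℝ^d → ℝ, max_{x∈B} |ℓ(x)| ≤ √d · max_{x∈X} |ℓ(x)|. -/

import Mathlib

open Matrix Set Polynomial Filter

noncomputable section AuxDesign

variable {d : ℕ}

/-- `Sym2`-coordinates of the rank-one matrix `x xᵀ`. -/
def phiF (d : ℕ) (x : Fin d → ℝ) : Sym2 (Fin d) → ℝ :=
  Sym2.lift ⟨fun i j => x i * x j, fun i j => mul_comm _ _⟩

/-- Reconstruct a symmetric matrix from its `Sym2`-coordinates, as a linear map. -/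
def matL (d : ℕ) : (Sym2 (Fin d) → ℝ) →ₗ[ℝ] Matrix (Fin d) (Fin d) ℝ where
  toFun w := Matrix.of fun i j => w s(i, j)
  map_add' w₁ w₂ := by ext i j; simp
  map_smul' r w := by ext i j; simp

lemma matL_phiF (x : Fin d → ℝ) : matL d (phiF d x) = vecMulVec x x := by
  ext i j; simp [matL, phiF, vecMulVec_apply]

lemma matL_symm (w : Sym2 (Fin d) → ℝ) (i j : Fin d) : matL d w i j = matL d w j i := by
  simp [matL, Sym2.eq_swap]

lemma continuous_matL : Continuous (matL d) :=
  continuous_matrix fun _ _ => continuous_apply _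

lemma continuous_phiF : Continuous (phiF d) := by
  refine continuous_pi fun s => ?_
  induction s using Sym2.ind with
  | _ i j => simpa [phiF] using (by fun_prop :
      Continuous fun a : Fin d → ℝ => a i * a j)

/-- The quadratic form `c ⬝ᵥ (mat w) *ᵥ c`, as a linear function of `w`. -/
def qForm (d : ℕ) (c : Fin d → ℝ) : (Sym2 (Fin d) → ℝ) →ₗ[ℝ] ℝ where
  toFun w := c ⬝ᵥ (matL d w) *ᵥ c
  map_add' u v := by
    show c ⬝ᵥ (matL d (u + v)) *ᵥ c = _
    rw [map_add, add_mulVec, dotProduct_add]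
  map_smul' r w := by
    show c ⬝ᵥ (matL d (r • w)) *ᵥ c = _
    rw [LinearMap.map_smul, smul_mulVec, dotProduct_smul]; rfl

lemma qForm_apply (d : ℕ) (c : Fin d → ℝ) (w : Sym2 (Fin d) → ℝ) :
    qForm d c w = c ⬝ᵥ (matL d w) *ᵥ c := rfl

lemma quad_phiF (x c : Fin d → ℝ) : qForm d c (phiF d x) = (c ⬝ᵥ x) ^ 2 := by
  rw [qForm_apply, matL_phiF]
  calc c ⬝ᵥ (vecMulVec x x) *ᵥ c
      = ∑ i, ∑ j, (c i * x i) * (c j * x j) := by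
        simp only [dotProduct, mulVec, vecMulVec_apply, Finset.mul_sum]
        exact Finset.sum_congr rfl fun i _ => Finset.sum_congr rfl fun j _ => by ring
    _ = (∑ i, c i * x i) * (∑ j, c j * x j) := by rw [Finset.sum_mul_sum]
    _ = (c ⬝ᵥ x) ^ 2 := by rw [sq]; rfl

lemma psd_of_mem_hull {B : Set (Fin d → ℝ)} {w : Sym2 (Fin d) → ℝ}
    (hw : w ∈ convexHull ℝ (phiF d '' B)) (y : Fin d → ℝ) :
    0 ≤ y ⬝ᵥ (matL d w) *ᵥ y := by
  have h : w ∈ {w | 0 ≤ qForm d y w} := by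
    refine convexHull_min ?_ (convex_halfSpace_ge (qForm d y).isLinear 0) hw
    rintro _ ⟨x, -, rfl⟩
    rw [mem_setOf_eq, quad_phiF]
    positivity
  exact h

lemma trace_mul_vecMulVec (M : Matrix (Fin d) (Fin d) ℝ) (x : Fin d → ℝ) :
    trace (M * vecMulVec x x) = x ⬝ᵥ M *ᵥ x := by
  simp only [trace, diag_apply, mul_apply, vecMulVec_apply, dotProduct, mulVec, Finset.mul_sum]
  exact Finset.sum_congr rfl fun i _ => Finset.sum_congr rfl fun j _ => by ring

lemma dot_symm_comm {A : Matrix (Fin d) (Fin d) ℝ} (hA : ∀ i j, A i j = A j i)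
    (y z : Fin d → ℝ) : y ⬝ᵥ A *ᵥ z = z ⬝ᵥ A *ᵥ y := by
  simp only [dotProduct, mulVec, Finset.mul_sum]
  rw [Finset.sum_comm]
  exact Finset.sum_congr rfl fun i _ => Finset.sum_congr rfl fun j _ => by rw [hA j i]; ring

lemma isCompact_convexHull_of_isCompact {E : Type*} [NormedAddCommGroup E] [NormedSpace ℝ E]
    [FiniteDimensional ℝ E] {s : Set E} (hs : IsCompact s) :
    IsCompact (convexHull ℝ s) := by
  rcases s.eq_empty_or_nonempty with rfl | ⟨x₀, hx₀⟩
  · simp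
  classical
  set n := Module.finrank ℝ E + 1 with hn
  have him : convexHull ℝ s =
      (fun p : (Fin n → ℝ) × (Fin n → E) => ∑ i, p.1 i • p.2 i) ''
        (stdSimplex ℝ (Fin n) ×ˢ Set.univ.pi fun _ => s) := by
    apply Subset.antisymm
    · intro z hz
      obtain ⟨ι, hι, zf, wf, hrange, hai, hpos, hsum, hz⟩ :=
        eq_pos_convex_span_of_mem_convexHull hz
      have hcard : Fintype.card ι ≤ n := by
        refine hai.card_le_finrank_succ.trans ?_
        have := Submodule.finrank_le (vectorSpan ℝ (Set.range zf))
        omega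
      obtain ⟨f⟩ : Nonempty (ι ↪ Fin n) :=
        Function.Embedding.nonempty_of_card_le (by simpa using hcard)
      refine ⟨(fun i => ∑ j, if f j = i then wf j else 0,
               fun i => if h : ∃ j, f j = i then zf h.choose else x₀), ⟨⟨?_, ?_⟩, ?_⟩, ?_⟩
      · intro i
        refine Finset.sum_nonneg fun j _ => ?_
        split_ifs
        · exact (hpos j).le
        · exact le_rfl
      · rw [Finset.sum_comm]
        simpa [Finset.sum_ite_eq'] using hsum
      · intro i _
        dsimp only
        split_ifs with h
        · exact hrange ⟨_, rfl⟩
        · exact hx₀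
      · dsimp only
        rw [← hz]
        simp only [Finset.sum_smul, ite_smul, zero_smul]
        rw [Finset.sum_comm]
        refine Finset.sum_congr rfl fun j _ => ?_
        rw [Finset.sum_ite_eq Finset.univ (f j)]
        simp only [Finset.mem_univ, if_true]
        congr 1
        have h : ∃ j', f j' = f j := ⟨j, rfl⟩
        rw [dif_pos h]
        congr 1
        exact f.injective h.choose_spec
    · rintro _ ⟨⟨w, y⟩, ⟨hw, hy⟩, rfl⟩
      exact mem_convexHull_of_exists_fintype w y hw.1 hw.2
        (fun i => hy i (Set.mem_univ i)) rfl
  rw [him]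
  refine (((isCompact_stdSimplex _ _).prod (isCompact_univ_pi fun _ => hs)).image ?_)
  refine continuous_finset_sum _ fun i _ => ?_
  exact ((continuous_apply i).comp continuous_fst).smul ((continuous_apply i).comp continuous_snd)

lemma design_eps {B : Set (Fin d → ℝ)} (hB : IsCompact B) (hne : B.Nonempty)
    {ε : ℝ} (hε : 0 < ε) :
    ∃ w ∈ convexHull ℝ (phiF d '' B), ∀ c : Fin d → ℝ, ∀ x ∈ B,
      (c ⬝ᵥ x) ^ 2 ≤ d * (qForm d c w + ε * (c ⬝ᵥ c)) := by
  classical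
  set K := convexHull ℝ (phiF d '' B) with hK
  have hKc : IsCompact K := isCompact_convexHull_of_isCompact (hB.image continuous_phiF)
  have hKne : K.Nonempty := by
    rw [hK, convexHull_nonempty_iff]
    exact hne.image _
  have hcont : Continuous fun w => (matL d w + ε • (1 : Matrix (Fin d) (Fin d) ℝ)).det :=
    (continuous_matL.add continuous_const).matrix_det
  obtain ⟨w₀, hw₀K, hmax⟩ := hKc.exists_isMaxOn hKne hcont.continuousOn
  set A := matL d w₀ + ε • (1 : Matrix (Fin d) (Fin d) ℝ) with hA
  refine ⟨w₀, hw₀K, ?_⟩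
  have hAsymm : ∀ i j, A i j = A j i := by
    intro i j
    simp only [hA, Matrix.add_apply, Matrix.smul_apply, Matrix.one_apply, matL_symm]
    by_cases h : i = j <;> simp [h, eq_comm]
  have hquadA : ∀ y : Fin d → ℝ, y ⬝ᵥ A *ᵥ y = y ⬝ᵥ (matL d w₀) *ᵥ y + ε * (y ⬝ᵥ y) := by
    intro y
    rw [hA, add_mulVec, dotProduct_add, smul_mulVec, one_mulVec, dotProduct_smul,
      smul_eq_mul]
  have hApsd : ∀ y, 0 ≤ y ⬝ᵥ A *ᵥ y := by
    intro y
    rw [hquadA]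
    have h1 := psd_of_mem_hull hw₀K y
    have h2 : (0:ℝ) ≤ y ⬝ᵥ y := by
      simp only [dotProduct]
      exact Finset.sum_nonneg fun i _ => mul_self_nonneg _
    nlinarith
  have hApd : A.PosDef := by
    refine Matrix.PosDef.of_dotProduct_mulVec_pos ?_ ?_
    · ext i j
      simp only [conjTranspose_apply, star_trivial]
      exact hAsymm j i
    · intro y hy
      have h1 := psd_of_mem_hull hw₀K y
      have hnn : (0:ℝ) ≤ y ⬝ᵥ y := by
        simp only [dotProduct]
        exact Finset.sum_nonneg fun i _ => mul_self_nonneg _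
      have h2 : (0:ℝ) < y ⬝ᵥ y := by
        rcases hnn.lt_or_eq with h | h
        · exact h
        · exact absurd (dotProduct_self_eq_zero.mp h.symm) hy
      have hsy : star y = y := funext fun i => rfl
      rw [hsy, hquadA]
      nlinarith
  have hdet : IsUnit A.det := hApd.det_pos.ne'.isUnit
  -- first-order optimality: `xᵀ A⁻¹ x ≤ d` for `x ∈ B`
  have hopt : ∀ x ∈ B, x ⬝ᵥ A⁻¹ *ᵥ x ≤ (d : ℝ) := by
    intro x hx
    set D := matL d (phiF d x) - matL d w₀ with hD
    set Y := A⁻¹ * D with hY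
    have htr : trace Y ≤ 0 := by
      set q : ℝ[X] := (det (1 + (X : ℝ[X]) • Y.map C)).divX.divX with hq
      have key : ∀ t : ℝ, t ∈ Ioc (0:ℝ) 1 → trace Y ≤ -(q.eval t) * t := by
        rintro t ⟨ht0, ht1⟩
        have hmem : w₀ + t • (phiF d x - w₀) ∈ K := by
          refine (convex_convexHull ℝ _).add_smul_sub_mem hw₀K ?_ ⟨ht0.le, ht1⟩
          exact subset_convexHull ℝ _ ⟨x, hx, rfl⟩
        have hle : (matL d (w₀ + t • (phiF d x - w₀)) + ε • 1).det ≤ A.det := hmax hmem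
        have heq1 : matL d (w₀ + t • (phiF d x - w₀)) + ε • 1 = A + t • D := by
          rw [map_add, LinearMap.map_smul, map_sub, hD, hA]
          abel
        have heq2 : A + t • D = A * (1 + t • Y) := by
          rw [Matrix.mul_add, Matrix.mul_one, Matrix.mul_smul, hY, ← Matrix.mul_assoc,
            Matrix.mul_nonsing_inv _ hdet, Matrix.one_mul]
        rw [heq1, heq2, det_mul] at hle
        have hle2 : (1 + t • Y).det ≤ 1 := by
          nlinarith [hApd.det_pos, hle]
        rw [Matrix.det_one_add_smul] at hle2
        have h' : trace Y * t ≤ (-(q.eval t) * t) * t := by rw [← hq] at hle2; nlinarith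
        exact le_of_mul_le_mul_right h' ht0
      have htend : Filter.Tendsto (fun t : ℝ => -(q.eval t) * t) (nhdsWithin 0 (Ioi 0))
          (nhds 0) := by
        have hc : Continuous fun t : ℝ => -(q.eval t) * t := (q.continuous.neg).mul continuous_id
        exact Filter.Tendsto.mono_left (by simpa using hc.tendsto 0) nhdsWithin_le_nhds
      refine ge_of_tendsto htend ?_
      filter_upwards [Ioc_mem_nhdsGT zero_lt_one] with t ht using key t ht
    have e1 : trace (A⁻¹ * matL d (phiF d x)) = x ⬝ᵥ A⁻¹ *ᵥ x := by
      rw [matL_phiF, trace_mul_vecMulVec]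
    have e2 : trace (A⁻¹ * matL d w₀) = (d : ℝ) - ε * trace A⁻¹ := by
      have : matL d w₀ = A - ε • 1 := by rw [hA]; abel
      rw [this, Matrix.mul_sub, trace_sub, Matrix.nonsing_inv_mul _ hdet, trace_one,
        Matrix.mul_smul, trace_smul]
      simp [mul_comm]
    have e3 : (0:ℝ) ≤ trace A⁻¹ := by
      have hinv : A⁻¹.PosDef := hApd.inv
      have : ∀ i, 0 ≤ A⁻¹ i i := fun i => by
        have := hinv.posSemidef.dotProduct_mulVec_nonneg (Pi.single i 1)
        simpa using this
      exact Finset.sum_nonneg fun i _ => this i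
    have := htr
    rw [hY, Matrix.mul_sub, trace_sub, sub_nonpos] at this
    rw [← e1]
    calc trace (A⁻¹ * matL d (phiF d x)) ≤ trace (A⁻¹ * matL d w₀) := this
      _ = (d : ℝ) - ε * trace A⁻¹ := e2
      _ ≤ d := by nlinarith
  -- Cauchy–Schwarz with respect to `A`
  intro c x hx
  set u := A⁻¹ *ᵥ x with hu
  have hAu : A *ᵥ u = x := by
    rw [hu, mulVec_mulVec, Matrix.mul_nonsing_inv _ hdet, one_mulVec]
  have hcx : c ⬝ᵥ A *ᵥ u = c ⬝ᵥ x := by rw [hAu]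
  have hux : u ⬝ᵥ A *ᵥ c = c ⬝ᵥ x := by rw [dot_symm_comm hAsymm, hAu]
  have huu : u ⬝ᵥ A *ᵥ u = x ⬝ᵥ A⁻¹ *ᵥ x := by
    rw [hAu]
    exact dotProduct_comm u x
  have hdisc : discrim (u ⬝ᵥ A *ᵥ u) (2 * (c ⬝ᵥ x)) (c ⬝ᵥ A *ᵥ c) ≤ 0 := by
    apply discrim_le_zero
    intro t
    have expand : (u ⬝ᵥ A *ᵥ u) * (t * t) + 2 * (c ⬝ᵥ x) * t + c ⬝ᵥ A *ᵥ c
        = (c + t • u) ⬝ᵥ A *ᵥ (c + t • u) := by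
      rw [mulVec_add, mulVec_smul, dotProduct_add, add_dotProduct, add_dotProduct,
        dotProduct_smul, smul_dotProduct, dotProduct_smul, smul_eq_mul, smul_eq_mul,
        smul_eq_mul, hcx, hux]
      rw [smul_dotProduct]
      simp only [smul_eq_mul]
      ring
    rw [expand]
    exact hApsd _
  rw [discrim, pow_two] at hdisc
  have hfinal : (c ⬝ᵥ x) ^ 2 ≤ (x ⬝ᵥ A⁻¹ *ᵥ x) * (c ⬝ᵥ A *ᵥ c) := by
    rw [← huu]; nlinarith [hdisc]
  have hcAc : c ⬝ᵥ A *ᵥ c = qForm d c w₀ + ε * (c ⬝ᵥ c) := by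
    rw [qForm_apply, hquadA]
  calc (c ⬝ᵥ x) ^ 2 ≤ (x ⬝ᵥ A⁻¹ *ᵥ x) * (c ⬝ᵥ A *ᵥ c) := hfinal
    _ ≤ d * (c ⬝ᵥ A *ᵥ c) := by
        have h0 : 0 ≤ c ⬝ᵥ A *ᵥ c := hApsd c
        exact mul_le_mul_of_nonneg_right (hopt x hx) h0
    _ = d * (qForm d c w₀ + ε * (c ⬝ᵥ c)) := by rw [hcAc]

lemma design {B : Set (Fin d → ℝ)} (hB : IsCompact B) (hne : B.Nonempty) :
    ∃ w ∈ convexHull ℝ (phiF d '' B), ∀ c : Fin d → ℝ, ∀ x ∈ B,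
      (c ⬝ᵥ x) ^ 2 ≤ d * qForm d c w := by
  have hKc : IsCompact (convexHull ℝ (phiF d '' B)) :=
    isCompact_convexHull_of_isCompact (hB.image continuous_phiF)
  have h : ∀ n : ℕ, ∃ w ∈ convexHull ℝ (phiF d '' B), ∀ c : Fin d → ℝ, ∀ x ∈ B,
      (c ⬝ᵥ x) ^ 2 ≤ d * (qForm d c w + (1 / (n + 1)) * (c ⬝ᵥ c)) := fun n =>
    design_eps hB hne (by positivity)
  choose ws hws hP using h
  obtain ⟨w, hwK, σ, hσ, htend⟩ := hKc.tendsto_subseq hws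
  refine ⟨w, hwK, fun c x hx => ?_⟩
  have hc : Continuous (qForm d c) := (qForm d c).continuous_of_finiteDimensional
  have h1 : Tendsto (fun k => (d : ℝ) * (qForm d c (ws (σ k)) + (1 / (σ k + 1)) * (c ⬝ᵥ c)))
      atTop (nhds ((d : ℝ) * (qForm d c w + 0 * (c ⬝ᵥ c)))) := by
    refine Tendsto.const_mul _ (Tendsto.add ?_ (Tendsto.mul_const _ ?_))
    · exact (hc.tendsto w).comp htend
    · exact tendsto_one_div_add_atTop_nhds_zero_nat.comp hσ.tendsto_atTop
  have h2 : (c ⬝ᵥ x) ^ 2 ≤ (d : ℝ) * (qForm d c w + 0 * (c ⬝ᵥ c)) :=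
    ge_of_tendsto h1 (Eventually.of_forall fun k => by exact_mod_cast hP (σ k) c x hx)
  simpa using h2

end AuxDesign

theorem stmt0 (d : ℕ) (B : Set (Fin d → ℝ)) (hB : IsCompact B) (hne : B.Nonempty) :
    ∃ X : Finset (Fin d → ℝ), ↑X ⊆ B ∧ X.Nonempty ∧ X.card ≤ 1 + d * (d + 1) / 2 ∧
      ∀ c : Fin d → ℝ, ∀ x ∈ B,
        |∑ i, c i * x i| ≤
          Real.sqrt d * sSup ((fun y => |∑ i, c i * y i|) '' (X : Set (Fin d → ℝ))) := by
  classical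
  obtain ⟨w, hwK, hkey⟩ := design hB hne
  rw [convexHull_eq_union] at hwK
  simp only [Set.mem_iUnion, exists_prop] at hwK
  obtain ⟨t, hts, hai, hwt⟩ := hwK
  have hcard : t.card ≤ 1 + d * (d + 1) / 2 := by
    have h1 := hai.card_le_finrank_succ
    rw [Fintype.card_coe] at h1
    have h2 : Module.finrank ℝ (vectorSpan ℝ (Set.range ((↑) : t → (Sym2 (Fin d) → ℝ)))) ≤
        Module.finrank ℝ (Sym2 (Fin d) → ℝ) := Submodule.finrank_le _
    have h3 : Module.finrank ℝ (Sym2 (Fin d) → ℝ) = d * (d + 1) / 2 := by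
      rw [Module.finrank_pi, Sym2.card, Fintype.card_fin, Nat.choose_two_right]
      simp [Nat.mul_comm]
    omega
  have hpre : ∀ y ∈ t, ∃ x ∈ B, phiF d x = y := fun y hy => by
    obtain ⟨x, hxB, hxy⟩ := hts hy; exact ⟨x, hxB, hxy⟩
  set g : (Sym2 (Fin d) → ℝ) → (Fin d → ℝ) := fun y =>
    if h : ∃ x ∈ B, phiF d x = y then h.choose else hne.choose with hg
  have hgB : ∀ y ∈ t, g y ∈ B ∧ phiF d (g y) = y := by
    intro y hy
    have h := hpre y hy
    rw [hg]; dsimp only; rw [dif_pos h]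
    exact ⟨h.choose_spec.1, h.choose_spec.2⟩
  set X := t.image g with hX
  have hXB : ↑X ⊆ B := by
    intro z hz
    rw [hX] at hz
    obtain ⟨y, hy, rfl⟩ := Finset.mem_image.mp hz
    exact (hgB y hy).1
  have htne : t.Nonempty := by
    by_contra h
    rw [Finset.not_nonempty_iff_eq_empty] at h
    subst h
    simp at hwt
  refine ⟨X, hXB, htne.image g, (Finset.card_image_le).trans hcard, ?_⟩
  intro c x hx
  rw [Finset.convexHull_eq] at hwt
  obtain ⟨wt, hwt0, hwt1, hcm⟩ := hwt
  set m := sSup ((fun y => |∑ i, c i * y i|) '' (X : Set (Fin d → ℝ))) with hm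
  have hbdd : BddAbove ((fun y => |∑ i, c i * y i|) '' (X : Set (Fin d → ℝ))) :=
    (X.finite_toSet.image _).bddAbove
  have hle : ∀ z ∈ X, |c ⬝ᵥ z| ≤ m := fun z hz => le_csSup hbdd ⟨z, hz, rfl⟩
  have hm0 : 0 ≤ m := by
    obtain ⟨z, hz⟩ := htne.image g
    exact le_trans (abs_nonneg _) (hle z hz)
  have hq : qForm d c w ≤ m ^ 2 := by
    rw [← hcm, Finset.centerMass_eq_of_sum_1 _ _ hwt1, map_sum]
    have hterm : ∀ y ∈ t, qForm d c (wt y • id y) ≤ wt y * m ^ 2 := by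
      intro y hy
      rw [LinearMap.map_smul, smul_eq_mul, id]
      have h1 : qForm d c y = (c ⬝ᵥ g y) ^ 2 := by rw [← quad_phiF (g y) c, (hgB y hy).2]
      have h2 : |c ⬝ᵥ g y| ≤ m := hle _ (Finset.mem_image_of_mem g hy)
      have h3 : (c ⬝ᵥ g y) ^ 2 ≤ m ^ 2 := by
        rw [← sq_abs]
        exact pow_le_pow_left₀ (abs_nonneg _) h2 2
      exact mul_le_mul_of_nonneg_left (h1 ▸ h3) (hwt0 y hy)
    calc (∑ y ∈ t, qForm d c (wt y • id y)) ≤ ∑ y ∈ t, wt y * m ^ 2 :=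
          Finset.sum_le_sum hterm
      _ = m ^ 2 := by rw [← Finset.sum_mul, hwt1, one_mul]
  have hkey2 : (c ⬝ᵥ x) ^ 2 ≤ d * m ^ 2 := by
    refine le_trans (hkey c x hx) ?_
    exact mul_le_mul_of_nonneg_left hq (Nat.cast_nonneg d)
  have habs : |∑ i, c i * x i| = |c ⬝ᵥ x| := rfl
  rw [habs]
  calc |c ⬝ᵥ x| = Real.sqrt ((c ⬝ᵥ x) ^ 2) := (Real.sqrt_sq_eq_abs _).symm
    _ ≤ Real.sqrt (d * m ^ 2) := Real.sqrt_le_sqrt hkey2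
    _ = Real.sqrt d * m := by
        rw [Real.sqrt_mul (Nat.cast_nonneg d), Real.sqrt_sq hm0]
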